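/- Suppose m = d, B* ∈ ℝ^{d×d} is invertible, and A* ∈ ℝ^{d×d} is entrywise nonnegative, invertible, and is not a scale transformation with respect to any component. Let μ be a probability measure on ℝ^d with full support and let X_1, X_2, … be i.i.d. with law μ. Define Ŝ_n(ω) = {C ∈ ℝ^{d×d} : C·y(X_i(ω)) − X_i(ω) ≥ 0 for all 1 ≤ i ≤ n}. Then for P-almost every ω, every sequence (C_n) with C_n ∈ Ŝ_n(ω) for each n converges to (B*)⁻¹, and consequently C_n is invertible for all sufficiently large n and C_n⁻¹ → B*. -/

import Mathlib

open MeasureTheory Matrix ProbabilityTheory Filter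

/-- Entrywise rectifier (ReLU). -/
def relu {k : ℕ} (v : Fin k → ℝ) : Fin k → ℝ := fun i => max (v i) 0

/-- The ground-truth residual unit (square case `m = d`). -/
def resUnit {d : ℕ} (A B : Matrix (Fin d) (Fin d) ℝ) (x : Fin d → ℝ) : Fin d → ℝ :=
  B.mulVec (relu (A.mulVec x) + x)

variable {d : ℕ} {A B : Matrix (Fin d) (Fin d) ℝ}

lemma relu_of_nonpos {v : Fin d → ℝ} (h : ∀ i, v i ≤ 0) : relu v = 0 := by
  funext i; simp [relu, max_eq_right (h i)]

lemma relu_of_nonneg {v : Fin d → ℝ} (h : ∀ i, 0 ≤ v i) : relu v = v := by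
  funext i; simp [relu, max_eq_left (h i)]

lemma resUnit_neg (hAinv : IsUnit A.det) {v : Fin d → ℝ} (h : ∀ i, v i ≤ 0) :
    resUnit A B (A⁻¹.mulVec v) = B.mulVec (A⁻¹.mulVec v) := by
  unfold resUnit
  rw [Matrix.mulVec_mulVec, Matrix.mul_nonsing_inv A hAinv, Matrix.one_mulVec,
    relu_of_nonpos h, zero_add]

lemma resUnit_pos (hAinv : IsUnit A.det) {v : Fin d → ℝ} (h : ∀ i, 0 ≤ v i) :
    resUnit A B (A⁻¹.mulVec v) = B.mulVec (v + A⁻¹.mulVec v) := by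
  unfold resUnit
  rw [Matrix.mulVec_mulVec, Matrix.mul_nonsing_inv A hAinv, Matrix.one_mulVec,
    relu_of_nonneg h]

lemma key_entries (hAnn : ∀ i j, 0 ≤ A i j) {N : Matrix (Fin d) (Fin d) ℝ}
    (hNle : ∀ i j, N i j ≤ 0)
    (h : ∀ i j : Fin d, i ≠ j → 0 ≤ (N * (A + 1)) i j)
    (hdiag : ∀ i, ∃ j', j' ≠ i ∧ A i j' ≠ 0) : N = 0 := by
  have hprod : ∀ i j, i ≠ j → ∀ k, N i k * (A + 1) k j = 0 := by
    intro i j hij k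
    have hsum : (N * (A + 1)) i j = ∑ k, N i k * (A + 1) k j := by
      simp [Matrix.mul_apply]
    have hterm : ∀ k ∈ Finset.univ, N i k * (A + 1) k j ≤ 0 := by
      intro k _
      have h1 : (0:ℝ) ≤ (A + 1) k j := by
        by_cases hkj : k = j
        · simp [Matrix.add_apply, Matrix.one_apply, hkj]
          nlinarith [hAnn j j]
        · simp [Matrix.add_apply, Matrix.one_apply, hkj]; exact hAnn k j
      exact mul_nonpos_of_nonpos_of_nonneg (hNle i k) h1
    have hz : ∑ k, N i k * (A + 1) k j = 0 := by
      have := h i j hij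
      rw [hsum] at this
      exact le_antisymm (Finset.sum_nonpos hterm) this
    exact (Finset.sum_eq_zero_iff_of_nonpos hterm).1 hz k (Finset.mem_univ k)
  ext i j
  simp only [Matrix.zero_apply]
  by_cases hij : i = j
  · subst hij
    obtain ⟨j', hj'i, hAij'⟩ := hdiag i
    have := hprod i j' (Ne.symm hj'i) i
    have h2 : (A + 1) i j' = A i j' := by
      have : i ≠ j' := fun h => hj'i h.symm
      simp [Matrix.add_apply, Matrix.one_apply, this]
    rw [h2] at this
    exact (mul_eq_zero.1 this).resolve_right hAij'
  · have := hprod i j hij j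
    have h2 : (A + 1) j j = A j j + 1 := by simp [Matrix.add_apply, Matrix.one_apply]
    rw [h2] at this
    have : N i j = 0 ∨ A j j + 1 = 0 := mul_eq_zero.1 this
    rcases this with h | h
    · exact h
    · exfalso; nlinarith [hAnn j j]

/-- Recession cone rigidity. -/
lemma keyB (hAnn : ∀ i j, 0 ≤ A i j) (hAinv : IsUnit A.det) (hBinv : IsUnit B.det)
    (hAns : ∀ j : Fin d, ∃ j', j' ≠ j ∧ A j j' ≠ 0)
    {E : Matrix (Fin d) (Fin d) ℝ}
    (hE : ∀ x : Fin d → ℝ, ∀ i, 0 ≤ E.mulVec (resUnit A B x) i) : E = 0 := by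
  set N : Matrix (Fin d) (Fin d) ℝ := E * B * A⁻¹ with hN
  have hNA : N * A = E * B := by
    rw [hN, Matrix.mul_assoc (E * B), Matrix.nonsing_inv_mul A hAinv, Matrix.mul_one]
  have hNle : ∀ i j, N i j ≤ 0 := by
    intro i j
    have := hE (A⁻¹.mulVec (-(Pi.single j 1))) i
    rw [resUnit_neg hAinv (by intro k; by_cases hk : k = j <;>
      simp [hk, Pi.single_apply])] at this
    rw [Matrix.mulVec_mulVec, Matrix.mulVec_mulVec, ← hN, Matrix.mulVec_neg] at this
    simp only [Pi.neg_apply, Matrix.mulVec_single_one, Matrix.col_apply, mul_one] at this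
    linarith
  have hpos : ∀ i j : Fin d, 0 ≤ (N * (A + 1)) i j := by
    intro i j
    have := hE (A⁻¹.mulVec (Pi.single j 1)) i
    rw [resUnit_pos hAinv (by intro k; by_cases hk : k = j <;>
      simp [hk, Pi.single_apply])] at this
    rw [Matrix.mulVec_add, Matrix.mulVec_mulVec, Matrix.mulVec_add,
      Matrix.mulVec_mulVec, Matrix.mulVec_mulVec] at this
    have heq : (E * B).mulVec (Pi.single j 1) + (E * (B * A⁻¹)).mulVec (Pi.single j 1)
        = (N * (A + 1)).mulVec (Pi.single j 1) := by
      rw [← Matrix.add_mulVec, Matrix.mul_add, Matrix.mul_one, hNA, hN, Matrix.mul_assoc]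
    rw [heq] at this
    simpa [Matrix.mulVec_single] using this
  have hNzero : N = 0 := key_entries hAnn hNle (fun i j _ => hpos i j) hAns
  have hEB : E * B = 0 := by rw [← hNA, hNzero, Matrix.zero_mul]
  calc E = E * B * B⁻¹ := by
        rw [Matrix.mul_assoc, Matrix.mul_nonsing_inv B hBinv, Matrix.mul_one]
    _ = 0 := by rw [hEB, Matrix.zero_mul]

/-- Feasible-for-all-points rigidity. -/
lemma keyA (hAnn : ∀ i j, 0 ≤ A i j) (hAinv : IsUnit A.det) (hBinv : IsUnit B.det)
    (hAns : ∀ j : Fin d, ∃ j', j' ≠ j ∧ A j j' ≠ 0)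
    {C : Matrix (Fin d) (Fin d) ℝ}
    (hC : ∀ x : Fin d → ℝ, ∀ i, x i ≤ C.mulVec (resUnit A B x) i) : C = B⁻¹ := by
  set N : Matrix (Fin d) (Fin d) ℝ := (C * B - 1) * A⁻¹ with hN
  have hNA : N * A = C * B - 1 := by
    rw [hN, Matrix.mul_assoc, Matrix.nonsing_inv_mul A hAinv, Matrix.mul_one]
  have hNle : ∀ i j, N i j ≤ 0 := by
    intro i j
    have h0 := hC (A⁻¹.mulVec (-(Pi.single j 1))) i
    rw [resUnit_neg hAinv (by intro k; by_cases hk : k = j <;>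
      simp [hk, Pi.single_apply]), Matrix.mulVec_mulVec, Matrix.mulVec_mulVec] at h0
    have hdiff : N.mulVec (-(Pi.single j 1)) =
        (C * B * A⁻¹).mulVec (-(Pi.single j 1)) - A⁻¹.mulVec (-(Pi.single j 1)) := by
      rw [hN, Matrix.sub_mul, Matrix.one_mul, Matrix.sub_mulVec]
    have hsub : (0:ℝ) ≤ (N.mulVec (-(Pi.single j 1))) i := by
      rw [hdiff]; simp only [Pi.sub_apply]; linarith
    rw [Matrix.mulVec_neg] at hsub
    simp only [Pi.neg_apply, Matrix.mulVec_single_one, Matrix.col_apply, mul_one] at hsub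
    linarith
  have hpos : ∀ i j : Fin d, i ≠ j → 0 ≤ (N * (A + 1)) i j := by
    intro i j hij
    have h0 := hC (A⁻¹.mulVec (Pi.single j 1)) i
    rw [resUnit_pos hAinv (by intro k; by_cases hk : k = j <;>
      simp [hk, Pi.single_apply]), Matrix.mulVec_add, Matrix.mulVec_mulVec,
      Matrix.mulVec_add, Matrix.mulVec_mulVec, Matrix.mulVec_mulVec] at h0
    simp only [Pi.add_apply, Matrix.mulVec_single_one, Matrix.col_apply, mul_one] at h0
    have heq : N * (A + 1) = C * B + C * (B * A⁻¹) - 1 - A⁻¹ := by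
      rw [Matrix.mul_add, Matrix.mul_one, hNA, hN, ← Matrix.mul_assoc,
        Matrix.sub_mul, Matrix.one_mul]
      noncomm_ring
    rw [heq]
    simp only [Matrix.sub_apply, Matrix.add_apply, Matrix.one_apply_ne hij]
    linarith
  have hNzero : N = 0 := key_entries hAnn hNle hpos hAns
  have hCB : C * B = 1 := by
    have : C * B - 1 = 0 := by rw [← hNA, hNzero, Matrix.zero_mul]
    linear_combination (norm := noncomm_ring) this
  exact (Matrix.inv_eq_left_inv hCB).symm

lemma continuous_mulVec_right (M : Matrix (Fin d) (Fin d) ℝ) :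
    Continuous fun v : Fin d → ℝ => M.mulVec v := by
  apply continuous_pi; intro i
  simp only [Matrix.mulVec, dotProduct]
  exact continuous_finset_sum _ fun k _ => continuous_const.mul (continuous_apply k)

lemma continuous_mulVec_left (v : Fin d → ℝ) (j : Fin d) :
    Continuous fun M : Matrix (Fin d) (Fin d) ℝ => M.mulVec v j := by
  simp only [Matrix.mulVec, dotProduct]
  exact continuous_finset_sum _ fun k _ =>
    (Continuous.matrix_elem continuous_id j k).mul continuous_const

lemma continuous_resUnit : Continuous (resUnit A B) := by
  unfold resUnit
  apply (continuous_mulVec_right B).comp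
  apply Continuous.add
  · have hrelu : Continuous (relu (k := d)) := by
      apply continuous_pi; intro i
      exact (continuous_apply i).max continuous_const
    exact hrelu.comp (continuous_mulVec_right A)
  · exact continuous_id

lemma all_of_dense {x : ℕ → Fin d → ℝ} (hx : Dense (Set.range x))
    {M : Matrix (Fin d) (Fin d) ℝ} {g : (Fin d → ℝ) → (Fin d → ℝ)} (hg : Continuous g)
    (h : ∀ i j, g (x i) j ≤ M.mulVec (resUnit A B (x i)) j) :
    ∀ y j, g y j ≤ M.mulVec (resUnit A B y) j := by
  set S : Set (Fin d → ℝ) := {y | ∀ j, g y j ≤ M.mulVec (resUnit A B y) j} with hS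
  have hSeq : S = ⋂ j, {y | g y j ≤ M.mulVec (resUnit A B y) j} := by
    ext y; simp [hS, Set.mem_iInter]
  have hcl : IsClosed S := by
    rw [hSeq]
    exact isClosed_iInter fun j => isClosed_le ((continuous_apply j).comp hg)
      ((continuous_apply j).comp ((continuous_mulVec_right M).comp continuous_resUnit))
  have hsub : Set.range x ⊆ S := by
    rintro _ ⟨i, rfl⟩; exact h i
  have : closure (Set.range x) ⊆ S := closure_minimal hsub hcl
  rw [hx.closure_eq] at this
  intro y
  exact this (Set.mem_univ y)

section NormInst

attribute [local instance] Matrix.normedAddCommGroup Matrix.normedSpace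

lemma proper_matrix : ProperSpace (Matrix (Fin d) (Fin d) ℝ) :=
  inferInstanceAs (ProperSpace (Fin d → Fin d → ℝ))

lemma conv_of_dense (hAnn : ∀ i j, 0 ≤ A i j) (hAinv : IsUnit A.det) (hBinv : IsUnit B.det)
    (hAns : ∀ j : Fin d, ∃ j', j' ≠ j ∧ A j j' ≠ 0)
    {x : ℕ → Fin d → ℝ} (hx : Dense (Set.range x))
    (Cseq : ℕ → Matrix (Fin d) (Fin d) ℝ)
    (hC : ∀ n, ∀ i < n, ∀ j, x i j ≤ (Cseq n).mulVec (resUnit A B (x i)) j) :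
    Tendsto Cseq atTop (nhds B⁻¹) := by
  haveI : ProperSpace (Matrix (Fin d) (Fin d) ℝ) := proper_matrix
  -- Step 1: boundedness
  have hbdd : ∃ R, ∀ n, ‖Cseq n - B⁻¹‖ ≤ R := by
    by_contra hub
    push_neg at hub
    set D : ℕ → Matrix (Fin d) (Fin d) ℝ := fun n => Cseq n - B⁻¹ with hD
    have hφ : ∀ k : ℕ, ∃ m, k < m ∧ (k:ℝ) < ‖D m‖ := by
      intro k
      obtain ⟨m, hm⟩ := hub ((k:ℝ) + ∑ n ∈ Finset.range (k+1), ‖D n‖)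
      have hsum0 : 0 ≤ ∑ n ∈ Finset.range (k+1), ‖D n‖ :=
        Finset.sum_nonneg fun n _ => norm_nonneg _
      refine ⟨m, ?_, by linarith⟩
      by_contra hle; push_neg at hle
      have h1 : ‖D m‖ ≤ ∑ n ∈ Finset.range (k+1), ‖D n‖ :=
        Finset.single_le_sum (fun n _ => norm_nonneg (D n))
          (Finset.mem_range.2 (Nat.lt_succ_of_le hle))
      have h2 : (0:ℝ) ≤ k := Nat.cast_nonneg k
      linarith
    choose φ hφgt hφnorm using hφ
    have hDpos : ∀ k, 0 < ‖D (φ k)‖ := fun k =>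
      lt_of_le_of_lt (Nat.cast_nonneg k) (hφnorm k)
    set E : ℕ → Matrix (Fin d) (Fin d) ℝ := fun k => ‖D (φ k)‖⁻¹ • D (φ k) with hE
    have hEs : ∀ k, E k ∈ Metric.sphere (0 : Matrix (Fin d) (Fin d) ℝ) 1 := by
      intro k
      simp only [hE, Metric.mem_sphere, dist_zero_right, norm_smul, norm_inv, norm_norm]
      exact inv_mul_cancel₀ (ne_of_gt (hDpos k))
    obtain ⟨L, hLs, ψ, hψ, hlim⟩ :=
      (isCompact_sphere (0 : Matrix (Fin d) (Fin d) ℝ) 1).tendsto_subseq hEs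
    have hkey : ∀ i j, (0:ℝ) ≤ L.mulVec (resUnit A B (x i)) j := by
      intro i j
      set y := resUnit A B (x i) with hy
      have htend1 : Tendsto (fun k => (E (ψ k)).mulVec y j) atTop
          (nhds (L.mulVec y j)) := ((continuous_mulVec_left y j).tendsto L).comp hlim
      have h3 : Tendsto (fun k => ‖D (φ (ψ k))‖) atTop atTop := by
        apply tendsto_atTop_mono _ tendsto_natCast_atTop_atTop
        intro k
        calc (k:ℝ) ≤ (ψ k : ℝ) := Nat.cast_le.2 hψ.le_apply
          _ ≤ ‖D (φ (ψ k))‖ := (hφnorm (ψ k)).le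
      have htend2 : Tendsto
          (fun k => ‖D (φ (ψ k))‖⁻¹ * (x i j - B⁻¹.mulVec y j)) atTop (nhds 0) := by
        have := (tendsto_inv_atTop_zero.comp h3).mul_const (x i j - B⁻¹.mulVec y j)
        simpa using this
      apply le_of_tendsto_of_tendsto htend2 htend1
      have hev : ∀ᶠ k in atTop, i < φ (ψ k) := by
        filter_upwards [eventually_ge_atTop i] with k hk
        exact lt_of_le_of_lt (le_trans hk hψ.le_apply) (hφgt (ψ k))
      filter_upwards [hev] with k hk
      have hcon := hC (φ (ψ k)) i hk j
      have hsplit : (Cseq (φ (ψ k))).mulVec y j = (D (φ (ψ k))).mulVec y j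
          + B⁻¹.mulVec y j := by
        rw [hD]
        simp only [Matrix.sub_mulVec, Pi.sub_apply]
        ring
      rw [hsplit] at hcon
      have hEval : (E (ψ k)).mulVec y j = ‖D (φ (ψ k))‖⁻¹ * (D (φ (ψ k))).mulVec y j := by
        rw [hE]
        simp only [Matrix.smul_mulVec, Pi.smul_apply, smul_eq_mul]
      rw [hEval]
      have hnn : (0:ℝ) ≤ ‖D (φ (ψ k))‖⁻¹ := inv_nonneg.2 (norm_nonneg _)
      apply mul_le_mul_of_nonneg_left _ hnn
      linarith
    have hfeas : ∀ y i, (0:ℝ) ≤ L.mulVec (resUnit A B y) i := by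
      have := all_of_dense (A := A) (B := B) hx (M := L)
        (g := fun _ => (0 : Fin d → ℝ)) continuous_const (fun i j => hkey i j)
      intro y i; exact this y i
    have hL0 : L = 0 := keyB hAnn hAinv hBinv hAns hfeas
    rw [hL0] at hLs
    simp at hLs
  obtain ⟨R, hR⟩ := hbdd
  apply tendsto_of_subseq_tendsto
  intro ns hns
  have hball : ∀ k, Cseq (ns k) ∈ Metric.closedBall B⁻¹ R := by
    intro k
    simpa [Metric.mem_closedBall, dist_eq_norm] using hR (ns k)
  obtain ⟨L, hLmem, ψ, hψ, hlim⟩ := (isCompact_closedBall B⁻¹ R).tendsto_subseq hball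
  have hnsψ : Tendsto (fun k => ns (ψ k)) atTop atTop := hns.comp hψ.tendsto_atTop
  have hfeas : ∀ i j, x i j ≤ L.mulVec (resUnit A B (x i)) j := by
    intro i j
    set y := resUnit A B (x i) with hy
    have htend : Tendsto (fun k => (Cseq (ns (ψ k))).mulVec y j) atTop
        (nhds (L.mulVec y j)) := ((continuous_mulVec_left y j).tendsto L).comp hlim
    apply le_of_tendsto_of_tendsto tendsto_const_nhds htend
    filter_upwards [hnsψ.eventually_gt_atTop i] with k hk
    exact hC (ns (ψ k)) i hk j
  have hall : ∀ y j, y j ≤ L.mulVec (resUnit A B y) j :=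
    all_of_dense hx (M := L) (g := id) continuous_id hfeas
  have hLB : L = B⁻¹ := keyA hAnn hAinv hBinv hAns hall
  exact ⟨ψ, by rwa [hLB] at hlim⟩

end NormInst

open MeasureTheory ProbabilityTheory in
lemma dense_samples {d : ℕ} (μ : Measure (Fin d → ℝ)) [IsProbabilityMeasure μ]
    (hsupp : ∀ U : Set (Fin d → ℝ), IsOpen U → U.Nonempty → 0 < μ U)
    (Ω : Type) [MeasurableSpace Ω] (P : Measure Ω) [IsProbabilityMeasure P]
    (X : ℕ → Ω → (Fin d → ℝ)) (hmeas : ∀ n, Measurable (X n))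
    (hindep : iIndepFun X P)
    (hdist : ∀ n, P.map (X n) = μ) :
    ∀ᵐ ω ∂P, Dense (Set.range fun i => X i ω) := by
  obtain ⟨b, hbc, hbne, hbb⟩ := TopologicalSpace.exists_countable_basis (Fin d → ℝ)
  have key : ∀ U ∈ b, ∀ᵐ ω ∂P, ∃ i, X i ω ∈ U := by
    intro U hU
    have hUo : IsOpen U := hbb.isOpen hU
    have hUne : U.Nonempty := Set.nonempty_iff_ne_empty.2 fun h => hbne (h ▸ hU)
    have hUm : MeasurableSet U := hUo.measurableSet
    have hp : 0 < μ U := hsupp U hUo hUne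
    rw [ae_iff]
    have hset : {ω | ¬ ∃ i, X i ω ∈ U} = ⋂ i, X i ⁻¹' Uᶜ := by
      ext ω; simp [not_exists]
    rw [hset]
    have hpre : ∀ i : ℕ, P (X i ⁻¹' Uᶜ) = μ Uᶜ := by
      intro i
      rw [← hdist i, Measure.map_apply (hmeas i) hUm.compl]
    have hr : μ Uᶜ < 1 := by
      rw [measure_compl hUm (measure_ne_top μ U)]
      simp only [measure_univ]
      exact ENNReal.sub_lt_self ENNReal.one_ne_top one_ne_zero hp.ne'
    have hbound : ∀ n : ℕ, P (⋂ i, X i ⁻¹' Uᶜ) ≤ (μ Uᶜ) ^ n := by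
      intro n
      have hsub : (⋂ i, X i ⁻¹' Uᶜ) ⊆ ⋂ i ∈ Finset.range n, X i ⁻¹' Uᶜ := by
        intro ω hω
        simp only [Set.mem_iInter] at hω ⊢
        exact fun i _ => hω i
      calc P (⋂ i, X i ⁻¹' Uᶜ) ≤ P (⋂ i ∈ Finset.range n, X i ⁻¹' Uᶜ) := measure_mono hsub
        _ = ∏ i ∈ Finset.range n, P (X i ⁻¹' Uᶜ) :=
            hindep.measure_inter_preimage_eq_mul (Finset.range n)
              (sets := fun _ => Uᶜ) (fun i _ => hUm.compl)
        _ = (μ Uᶜ) ^ n := by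
            rw [Finset.prod_congr rfl fun i _ => hpre i]
            simp
    have htend : Filter.Tendsto (fun n : ℕ => (μ Uᶜ) ^ n) Filter.atTop (nhds 0) :=
      ENNReal.tendsto_pow_atTop_nhds_zero_of_lt_one hr
    have hle0 : P (⋂ i, X i ⁻¹' Uᶜ) ≤ 0 := ge_of_tendsto' htend hbound
    exact le_antisymm hle0 zero_le
  have hae := (MeasureTheory.ae_ball_iff hbc).2 key
  filter_upwards [hae] with ω hω
  rw [hbb.dense_iff]
  intro o hob hone
  obtain ⟨i, hi⟩ := hω o hob
  exact ⟨X i ω, hi, Set.mem_range_self i⟩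


theorem stmt14 (d : ℕ) (hd : 1 ≤ d)
    (Astar Bstar : Matrix (Fin d) (Fin d) ℝ)
    (hAnn : ∀ i j, 0 ≤ Astar i j)
    (hAinv : IsUnit Astar.det) (hBinv : IsUnit Bstar.det)
    (hAns : ∀ j : Fin d, ∃ j', j' ≠ j ∧ Astar j j' ≠ 0)
    (μ : Measure (Fin d → ℝ)) [IsProbabilityMeasure μ]
    (hsupp : ∀ U : Set (Fin d → ℝ), IsOpen U → U.Nonempty → 0 < μ U)
    (Ω : Type) [MeasurableSpace Ω] (P : Measure Ω) [IsProbabilityMeasure P]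
    (X : ℕ → Ω → (Fin d → ℝ)) (hmeas : ∀ n, Measurable (X n))
    (hindep : iIndepFun X P)
    (hdist : ∀ n, P.map (X n) = μ) :
    let Shat : ℕ → Ω → Set (Matrix (Fin d) (Fin d) ℝ) := fun n ω =>
      {C | ∀ i < n, ∀ j, X i ω j ≤ C.mulVec (resUnit Astar Bstar (X i ω)) j}
    ∀ᵐ ω ∂P, ∀ Cseq : ℕ → Matrix (Fin d) (Fin d) ℝ,
      (∀ n, Cseq n ∈ Shat n ω) →
        Tendsto Cseq atTop (nhds Bstar⁻¹) ∧
          (∀ᶠ n in atTop, IsUnit (Cseq n).det) ∧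
          Tendsto (fun n => (Cseq n)⁻¹) atTop (nhds Bstar) := by
  intro Shat
  filter_upwards [dense_samples μ hsupp Ω P X hmeas hindep hdist] with ω hω
  intro Cseq hCseq
  have hC : ∀ n, ∀ i < n, ∀ j,
      X i ω j ≤ (Cseq n).mulVec (resUnit Astar Bstar (X i ω)) j := hCseq
  have h1 : Tendsto Cseq atTop (nhds Bstar⁻¹) :=
    conv_of_dense hAnn hAinv hBinv hAns hω Cseq hC
  have hdet : Tendsto (fun n => (Cseq n).det) atTop (nhds (Bstar⁻¹).det) :=
    ((Continuous.matrix_det continuous_id).tendsto Bstar⁻¹).comp h1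
  have hne : (Bstar⁻¹).det ≠ 0 := by
    have := Bstar.isUnit_nonsing_inv_det hBinv
    exact isUnit_iff_ne_zero.1 this
  have h2 : ∀ᶠ n in atTop, IsUnit (Cseq n).det := by
    filter_upwards [hdet.eventually_ne hne] with n hn
    exact isUnit_iff_ne_zero.2 hn
  refine ⟨h1, h2, ?_⟩
  have hadj : Tendsto (fun n => (Cseq n).adjugate) atTop (nhds (Bstar⁻¹).adjugate) :=
    ((Continuous.matrix_adjugate continuous_id).tendsto Bstar⁻¹).comp h1
  have hdi : Tendsto (fun n => ((Cseq n).det)⁻¹) atTop (nhds (((Bstar⁻¹).det)⁻¹)) :=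
    hdet.inv₀ hne
  have hsmul : Tendsto (fun n => ((Cseq n).det)⁻¹ • (Cseq n).adjugate) atTop
      (nhds (((Bstar⁻¹).det)⁻¹ • (Bstar⁻¹).adjugate)) := hdi.smul hadj
  have hrepr : ∀ M : Matrix (Fin d) (Fin d) ℝ, M⁻¹ = (M.det)⁻¹ • M.adjugate := by
    intro M; rw [Matrix.inv_def, Ring.inverse_eq_inv]
  have hBrw : ((Bstar⁻¹).det)⁻¹ • (Bstar⁻¹).adjugate = Bstar := by
    rw [← hrepr, Matrix.nonsing_inv_nonsing_inv Bstar hBinv]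
  rw [hBrw] at hsmul
  simp only [hrepr]
  exact hsmul
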